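/- Let g : ℝ^d → ℝ^n be the map x ↦ f(Ax) applied entrywise for a 1-Lipschitz f with f(0)=0, and let Λ be a positive diagonal matrix. If ‖Λ A x‖_p ≤ R^{1/p} and ‖Λ A x̄‖_p ≤ R^{1/p}, then for every coordinate i, |Λ_{ii}(f(Ax) - f(Ax̄))_i| ≤ 2 d^{1/2 - 1/max(2,p)} w_i^{1/p} R^{1/p}, where w_i is the i-th ℓ_p-Lewis weight of ΛA. -/

import Mathlib

open Matrix

lemma lewis_coord_bound (n d : ℕ) (p : ℝ) (hp : 1 ≤ p)
    (U : Matrix (Fin n) (Fin d) ℝ) (hrank : U.rank = d)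
    (w : Fin n → ℝ) (hw : ∀ i, 0 < w i)
    (hfix : ∀ i, w i = (U i ⬝ᵥ
      ((Uᵀ * Matrix.diagonal (fun k => w k ^ (1 - 2 / p)) * U)⁻¹ *ᵥ U i)) ^ (p / 2))
    (R : ℝ) (hR : 0 < R) (x : Fin d → ℝ)
    (hx : ∑ k, |(U *ᵥ x) k| ^ p ≤ R) (i : Fin n) :
    |(U *ᵥ x) i| ≤ (d : ℝ) ^ ((1 : ℝ) / 2 - 1 / max 2 p) * w i ^ (1 / p) * R ^ (1 / p) := by
  have hp0 : (0:ℝ) < p := lt_of_lt_of_le one_pos hp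
  set D : Fin n → ℝ := fun k => w k ^ (1 - 2/p) with hDdef
  have hDpos : ∀ k, 0 < D k := fun k => Real.rpow_pos_of_pos (hw k) _
  set M := Uᵀ * Matrix.diagonal D * U with hMdef
  -- quadratic form identity
  have hq : ∀ z : Fin d → ℝ, z ⬝ᵥ (M *ᵥ z) = ∑ k, D k * ((U *ᵥ z) k)^2 := by
    intro z
    rw [hMdef, ← Matrix.mulVec_mulVec, ← Matrix.mulVec_mulVec, Matrix.dotProduct_mulVec,
      Matrix.vecMul_transpose]
    simp [Matrix.mulVec_diagonal, dotProduct]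
    exact Finset.sum_congr rfl fun k _ => by ring
  -- injectivity
  have hinj : Function.Injective U.mulVecLin := by
    rw [← LinearMap.ker_eq_bot]
    have h1 := LinearMap.finrank_range_add_finrank_ker U.mulVecLin
    rw [Matrix.rank] at hrank
    rw [hrank] at h1
    simp only [Module.finrank_pi, Fintype.card_fin] at h1
    have h2 : Module.finrank ℝ (LinearMap.ker U.mulVecLin) = 0 := by omega
    rw [Submodule.finrank_eq_zero] at h2
    exact h2
  -- positive definiteness
  have hMpd : M.PosDef := by
    refine Matrix.PosDef.of_dotProduct_mulVec_pos ?_ ?_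
    · have : Mᴴ = M := by
        rw [hMdef]
        simp [Matrix.conjTranspose, Matrix.transpose_mul, Matrix.mul_assoc,
          Matrix.diagonal_transpose, RCLike.star_def]
        rfl
      exact this
    · intro z hz
      rw [star_trivial, hq]
      have hUz : U *ᵥ z ≠ 0 := by
        intro h
        exact hz (hinj (by simpa [Matrix.mulVecLin] using h))
      obtain ⟨k, hk⟩ : ∃ k, (U *ᵥ z) k ≠ 0 := Function.ne_iff.mp hUz
      apply Finset.sum_pos' (fun j _ => mul_nonneg (hDpos j).le (sq_nonneg _))
      exact ⟨k, Finset.mem_univ k, mul_pos (hDpos k) (by positivity)⟩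
  have hMsym : Mᵀ = M := by
    rw [hMdef]
    simp [Matrix.transpose_mul, Matrix.mul_assoc, Matrix.diagonal_transpose]
  have hdet : IsUnit M.det := hMpd.det_pos.ne'.isUnit
  set N := M⁻¹ with hNdef
  have hMN : M * N = 1 := Matrix.mul_nonsing_inv _ hdet
  -- the c_k's
  have hc0 : ∀ k, 0 ≤ U k ⬝ᵥ (N *ᵥ U k) := fun k => by
    have := hMpd.inv.posSemidef.dotProduct_mulVec_nonneg (U k); rwa [star_trivial] at this
  have hcpos : ∀ k, 0 < U k ⬝ᵥ (N *ᵥ U k) := fun k => by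
    rcases (hc0 k).lt_or_eq with h | h
    · exact h
    · exfalso
      have h2 := hfix k
      rw [← h, Real.zero_rpow (by positivity : p/2 ≠ 0)] at h2
      exact (hw k).ne' h2
  have hcw : ∀ k, U k ⬝ᵥ (N *ᵥ U k) = w k ^ ((2:ℝ)/p) := fun k => by
    rw [hfix k, ← Real.rpow_mul (hcpos k).le, show p/2 * (2/p) = 1 by field_simp,
      Real.rpow_one]
  -- Cauchy-Schwarz
  have hCS : ∀ k (z : Fin d → ℝ), (U k ⬝ᵥ z)^2 ≤ w k ^ ((2:ℝ)/p) * (z ⬝ᵥ (M *ᵥ z)) := by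
    intro k z
    set u := U k with hu
    set c := u ⬝ᵥ (N *ᵥ u) with hcdef
    have hc : 0 < c := hcpos k
    set y := N *ᵥ u with hy
    have hMy : M *ᵥ y = u := by
      rw [hy, Matrix.mulVec_mulVec, hMN]; exact Matrix.one_mulVec u
    have hcy : u ⬝ᵥ y = c := rfl
    set t : ℝ := (u ⬝ᵥ z) / c with ht
    have h0 : 0 ≤ (z - t • y) ⬝ᵥ (M *ᵥ (z - t • y)) := by
      have := hMpd.posSemidef.dotProduct_mulVec_nonneg (z - t • y); rwa [star_trivial] at this
    have hyMz : y ⬝ᵥ (M *ᵥ z) = u ⬝ᵥ z := by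
      rw [Matrix.dotProduct_mulVec, ← hMsym, Matrix.vecMul_transpose, hMy]
    have hyMy : y ⬝ᵥ (M *ᵥ y) = c := by rw [hMy, dotProduct_comm]
    have hzMy : z ⬝ᵥ (M *ᵥ y) = u ⬝ᵥ z := by rw [hMy, dotProduct_comm]
    have hexp : (z - t • y) ⬝ᵥ (M *ᵥ (z - t • y))
        = z ⬝ᵥ (M *ᵥ z) - 2 * t * (u ⬝ᵥ z) + t^2 * c := by
      rw [Matrix.mulVec_sub, Matrix.mulVec_smul]
      rw [sub_dotProduct, smul_dotProduct, dotProduct_sub,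
        dotProduct_smul, dotProduct_sub, dotProduct_smul]
      rw [hyMz, hzMy, hyMy]
      simp only [smul_eq_mul]; ring
    rw [hexp] at h0
    have e1 : z ⬝ᵥ (M *ᵥ z) - 2 * t * (u ⬝ᵥ z) + t^2 * c
        = z ⬝ᵥ (M *ᵥ z) - (u ⬝ᵥ z)^2 / c := by
      rw [ht]; field_simp; ring
    rw [e1] at h0
    have h2 := (div_le_iff₀ hc).mp (by linarith : (u ⬝ᵥ z)^2 / c ≤ z ⬝ᵥ (M *ᵥ z))
    rw [← hcw k, ← hcdef]
    linarith
  -- abbreviations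
  set a : Fin n → ℝ := fun k => |(U *ᵥ x) k| with ha
  have han : ∀ k, 0 ≤ a k := fun k => abs_nonneg _
  set T : ℝ := ∑ k, D k * a k ^ 2 with hT
  have hTq : x ⬝ᵥ (M *ᵥ x) = T := by
    rw [hq x, hT]
    exact Finset.sum_congr rfl fun k _ => by rw [ha]; simp [sq_abs]
  have hkey : ∀ k, a k ^ 2 ≤ w k ^ ((2:ℝ)/p) * T := by
    intro k
    have h1 := hCS k x
    rw [hTq] at h1
    have h2 : (U *ᵥ x) k = U k ⬝ᵥ x := rfl
    calc a k ^ 2 = (U k ⬝ᵥ x)^2 := by rw [ha]; simp [sq_abs, h2]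
      _ ≤ _ := h1
  have hTnn : 0 ≤ T := Finset.sum_nonneg fun k _ => mul_nonneg (hDpos k).le (sq_nonneg _)
  rcases le_or_gt p 2 with hple | hpgt
  · -- case p ≤ 2
    have hmax : max 2 p = 2 := max_eq_left hple
    have hgoal : (d : ℝ) ^ ((1:ℝ)/2 - 1/max 2 p) = 1 := by
      rw [hmax]; norm_num
    rw [hgoal]
    have hne : (Finset.univ : Finset (Fin n)).Nonempty := ⟨i, Finset.mem_univ i⟩
    set s := Finset.univ.sup' hne (fun k => a k / w k ^ ((1:ℝ)/p)) with hs
    have hwp : ∀ k, (0:ℝ) < w k ^ ((1:ℝ)/p) := fun k => Real.rpow_pos_of_pos (hw k) _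
    have hsk : ∀ k, a k ≤ s * w k ^ ((1:ℝ)/p) := by
      intro k
      have h1 : a k / w k ^ ((1:ℝ)/p) ≤ s := by
        rw [hs]; exact Finset.le_sup' (fun k => a k / w k ^ ((1:ℝ)/p)) (Finset.mem_univ k)
      calc a k = (a k / w k ^ ((1:ℝ)/p)) * w k ^ ((1:ℝ)/p) := by
            rw [div_mul_cancel₀ _ (hwp k).ne']
        _ ≤ s * w k ^ ((1:ℝ)/p) := mul_le_mul_of_nonneg_right h1 (hwp k).le
    have hs0 : 0 ≤ s := by
      refine le_trans (div_nonneg (han i) (hwp i).le) ?_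
      rw [hs]; exact Finset.le_sup' (fun k => a k / w k ^ ((1:ℝ)/p)) (Finset.mem_univ i)
    obtain ⟨j, -, hj⟩ := Finset.exists_mem_eq_sup' hne (fun k => a k / w k ^ ((1:ℝ)/p))
    have haj : a j = s * w j ^ ((1:ℝ)/p) := by
      rw [hs, hj, div_mul_cancel₀ _ (hwp j).ne']
    have hterm : ∀ k, D k * a k ^ 2 ≤ s ^ (2 - p) * a k ^ p := by
      intro k
      by_cases hak : a k = 0
      · rw [hak, Real.zero_rpow hp0.ne']
        simp
      · have hakpos : 0 < a k := (han k).lt_of_ne (Ne.symm hak)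
        have e2 : (a k)^2 = a k ^ p * a k ^ (2 - p) := by
          rw [← Real.rpow_add hakpos, show p + (2 - p) = (2:ℝ) by ring, Real.rpow_two]
        have e3 : a k ^ (2-p) ≤ (s * w k ^ ((1:ℝ)/p)) ^ (2-p) :=
          Real.rpow_le_rpow (han k) (hsk k) (by linarith)
        have e4 : (s * w k ^ ((1:ℝ)/p)) ^ (2-p) = s ^ (2-p) * w k ^ ((1/p)*(2-p)) := by
          rw [Real.mul_rpow hs0 (hwp k).le, ← Real.rpow_mul (hw k).le]
        have e5 : D k * (w k ^ ((1/p) * (2-p))) = 1 := by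
          show w k ^ (1 - 2/p) * _ = 1
          rw [← Real.rpow_add (hw k), show (1 - 2/p) + (1/p)*(2-p) = 0 by field_simp; ring]
          exact Real.rpow_zero _
        calc D k * a k ^ 2 = D k * (a k ^ p * a k ^ (2-p)) := by rw [e2]
          _ ≤ D k * (a k ^ p * (s^(2-p) * w k ^ ((1/p)*(2-p)))) := by
              refine mul_le_mul_of_nonneg_left ?_ (hDpos k).le
              exact mul_le_mul_of_nonneg_left (e3.trans_eq e4) (Real.rpow_nonneg (han k) p)
          _ = s^(2-p) * a k ^ p * (D k * w k ^ ((1/p)*(2-p))) := by ring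
          _ = s^(2-p) * a k ^ p := by rw [e5, mul_one]
    have hTle : T ≤ s ^ (2 - p) * R := by
      calc T ≤ ∑ k, s ^ (2-p) * a k ^ p := Finset.sum_le_sum fun k _ => hterm k
        _ = s ^ (2-p) * ∑ k, a k ^ p := by rw [Finset.mul_sum]
        _ ≤ s ^ (2-p) * R := mul_le_mul_of_nonneg_left hx (Real.rpow_nonneg hs0 _)
    have hsR : s ≤ R ^ ((1:ℝ)/p) := by
      rcases eq_or_lt_of_le hs0 with h0 | hspos
      · rw [← h0]; positivity
      · have h1 : a j ^ 2 ≤ w j ^ ((2:ℝ)/p) * (s^(2-p) * R) :=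
          le_trans (hkey j) (mul_le_mul_of_nonneg_left hTle (Real.rpow_nonneg (hw j).le _))
        have h2 : a j ^ 2 = s^2 * w j ^ ((2:ℝ)/p) := by
          rw [haj, mul_pow]
          congr 1
          rw [← Real.rpow_natCast (w j ^ ((1:ℝ)/p)) 2, ← Real.rpow_mul (hw j).le]
          congr 1
          push_cast
          ring
        have hwj : 0 < w j ^ ((2:ℝ)/p) := Real.rpow_pos_of_pos (hw j) _
        have h3 : s^2 ≤ s^(2-p) * R := by
          rw [h2] at h1
          nlinarith [hwj]
        have h4 : s^(2-p) * s^p = s^2 := by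
          rw [← Real.rpow_add hspos, show (2-p) + p = (2:ℝ) by ring, Real.rpow_two]
        have h5 : s^p ≤ R := by
          have h6 : s^(2-p) * s^p ≤ s^(2-p) * R := by rw [h4]; exact h3
          exact le_of_mul_le_mul_left h6 (Real.rpow_pos_of_pos hspos _)
        calc s = (s^p) ^ ((1:ℝ)/p) := by
              rw [← Real.rpow_mul hspos.le, show p * ((1:ℝ)/p) = 1 by field_simp, Real.rpow_one]
          _ ≤ R ^ ((1:ℝ)/p) := Real.rpow_le_rpow (Real.rpow_nonneg hspos.le p) h5 (by positivity)
    calc a i ≤ s * w i ^ ((1:ℝ)/p) := hsk i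
      _ ≤ R ^ ((1:ℝ)/p) * w i ^ ((1:ℝ)/p) := mul_le_mul_of_nonneg_right hsR (hwp i).le
      _ = 1 * w i ^ (1/p) * R ^ (1/p) := by ring
  · -- case 2 < p
    have hp2 : (0:ℝ) < p - 2 := by linarith
    have hmax : max 2 p = p := max_eq_right hpgt.le
    rw [hmax]
    -- trace identity : ∑ w = d
    have htr : ∑ k, w k = (d:ℝ) := by
      have h1 : Matrix.trace (M * N) = (d:ℝ) := by
        rw [hMN, Matrix.trace_one]; simp
      have h2 : Matrix.trace (M * N) = ∑ k, D k * (U k ⬝ᵥ (N *ᵥ U k)) := by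
        rw [hMdef, show Uᵀ * Matrix.diagonal D * U * N
            = Uᵀ * (Matrix.diagonal D * (U * N)) by simp [Matrix.mul_assoc],
          Matrix.trace_mul_comm,
          show Matrix.diagonal D * (U * N) * Uᵀ
            = Matrix.diagonal D * (U * N * Uᵀ) by simp [Matrix.mul_assoc],
          Matrix.trace]
        simp only [Matrix.diag_apply, Matrix.diagonal_mul]
        refine Finset.sum_congr rfl fun k _ => ?_
        congr 1
        simp only [Matrix.mul_apply, Matrix.mulVec, dotProduct, Matrix.transpose_apply,
          Finset.mul_sum, Finset.sum_mul]
        rw [Finset.sum_comm]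
        exact Finset.sum_congr rfl fun b _ => Finset.sum_congr rfl fun c _ => by ring
      rw [← h1, h2]
      refine Finset.sum_congr rfl fun k _ => ?_
      rw [hcw k]
      have hww : w k ^ (1 - 2/p) * w k ^ ((2:ℝ)/p) = w k := by
        rw [← Real.rpow_add (hw k), show (1 - 2/p) + (2:ℝ)/p = 1 by ring, Real.rpow_one]
      exact hww.symm
    -- Hölder
    have hconj : Real.HolderConjugate (p/(p-2)) (p/2) := by
      rw [Real.holderConjugate_iff]
      constructor
      · exact (one_lt_div hp2).mpr (by linarith)
      · rw [inv_div, inv_div]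
        field_simp
        ring
    have hH := Real.inner_le_Lp_mul_Lq_of_nonneg (s := Finset.univ) hconj
      (fun k _ => (hDpos k).le) (fun k _ => Real.rpow_nonneg (han k) _)
      (f := fun k => D k) (g := fun k => a k ^ (2:ℝ))
    have hA1 : ∀ k : Fin n, D k ^ (p/(p-2)) = w k := by
      intro k
      show (w k ^ (1 - 2/p)) ^ (p/(p-2)) = w k
      rw [← Real.rpow_mul (hw k).le, show (1 - 2/p) * (p/(p-2)) = 1 by field_simp,
        Real.rpow_one]
    have hA2 : ∀ k : Fin n, (a k ^ (2:ℝ)) ^ (p/2) = a k ^ p := by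
      intro k
      rw [← Real.rpow_mul (han k), show (2:ℝ) * (p/2) = p by field_simp]
    simp only [hA1, hA2, htr] at hH
    simp only [Real.rpow_two] at hH
    have hsum_nn : 0 ≤ ∑ k, a k ^ p := Finset.sum_nonneg fun k _ => Real.rpow_nonneg (han k) _
    have hHle : T ≤ (d:ℝ) ^ (1/(p/(p-2))) * R ^ (1/(p/2)) := by
      refine le_trans hH ?_
      refine mul_le_mul_of_nonneg_left ?_ (Real.rpow_nonneg (Nat.cast_nonneg d) _)
      exact Real.rpow_le_rpow hsum_nn hx (one_div_nonneg.mpr (div_nonneg hp0.le (by norm_num)))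
    have hE1 : (1:ℝ)/(p/(p-2)) = (p-2)/p := one_div_div _ _
    have hE2 : (1:ℝ)/(p/2) = 2/p := one_div_div _ _
    rw [hE1, hE2] at hHle
    have hB : a i ^ 2 ≤ w i ^ ((2:ℝ)/p) * ((d:ℝ) ^ ((p-2)/p) * R ^ ((2:ℝ)/p)) :=
      le_trans (hkey i) (mul_le_mul_of_nonneg_left hHle (Real.rpow_nonneg (hw i).le _))
    have hB'nn : (0:ℝ) ≤ (d:ℝ) ^ ((1:ℝ)/2 - 1/p) * w i ^ ((1:ℝ)/p) * R ^ ((1:ℝ)/p) :=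
      mul_nonneg (mul_nonneg (Real.rpow_nonneg (Nat.cast_nonneg d) _)
        (Real.rpow_nonneg (hw i).le _)) (Real.rpow_nonneg hR.le _)
    have f1 : ((d:ℝ) ^ ((1:ℝ)/2 - 1/p)) ^ 2 = (d:ℝ) ^ ((p-2)/p) := by
      rw [← Real.rpow_natCast ((d:ℝ) ^ ((1:ℝ)/2 - 1/p)) 2,
        ← Real.rpow_mul (Nat.cast_nonneg d)]
      congr 1
      push_cast
      field_simp
    have f2 : (w i ^ ((1:ℝ)/p)) ^ 2 = w i ^ ((2:ℝ)/p) := by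
      rw [← Real.rpow_natCast (w i ^ ((1:ℝ)/p)) 2, ← Real.rpow_mul (hw i).le]
      congr 1
      push_cast
      ring
    have f3 : (R ^ ((1:ℝ)/p)) ^ 2 = R ^ ((2:ℝ)/p) := by
      rw [← Real.rpow_natCast (R ^ ((1:ℝ)/p)) 2, ← Real.rpow_mul hR.le]
      congr 1
      push_cast
      ring
    have hsq : ((d:ℝ) ^ ((1:ℝ)/2 - 1/p) * w i ^ ((1:ℝ)/p) * R ^ ((1:ℝ)/p)) ^ 2
        = w i ^ ((2:ℝ)/p) * ((d:ℝ) ^ ((p-2)/p) * R ^ ((2:ℝ)/p)) := by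
      rw [mul_pow, mul_pow, f1, f2, f3]
      ring
    have hfin : a i ^ 2 ≤ ((d:ℝ) ^ ((1:ℝ)/2 - 1/p) * w i ^ ((1:ℝ)/p) * R ^ ((1:ℝ)/p)) ^ 2 := by
      rw [hsq]; exact hB
    calc a i = Real.sqrt (a i ^ 2) := (Real.sqrt_sq (han i)).symm
      _ ≤ Real.sqrt (((d:ℝ) ^ ((1:ℝ)/2 - 1/p) * w i ^ ((1:ℝ)/p) * R ^ ((1:ℝ)/p)) ^ 2) :=
          Real.sqrt_le_sqrt hfin
      _ = (d:ℝ) ^ ((1:ℝ)/2 - 1/p) * w i ^ ((1:ℝ)/p) * R ^ ((1:ℝ)/p) := Real.sqrt_sq hB'nn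

/-- If `f` is `1`-Lipschitz with `f 0 = 0`, `Λ` is a positive diagonal matrix, `ΛA` has full
column rank with `ℓ_p`-Lewis weights `w`, and `‖ΛAx‖_p^p ≤ R`, `‖ΛAx̄‖_p^p ≤ R`, then for each
coordinate `i`, `|Λ_{ii}(f(Ax) - f(Ax̄))_i| ≤ 2 d^{1/2-1/max(2,p)} w_i^{1/p} R^{1/p}`. -/
theorem lipschitz_coordinate_term_bound (n d : ℕ) (p : ℝ) (hp : 1 ≤ p)
    (A : Matrix (Fin n) (Fin d) ℝ) (Λ : Fin n → ℝ) (hΛ : ∀ i, 0 < Λ i)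
    (f : ℝ → ℝ) (hf : ∀ s t : ℝ, |f s - f t| ≤ |s - t|) (hf0 : f 0 = 0)
    (hrank : (Matrix.diagonal Λ * A).rank = d)
    (w : Fin n → ℝ) (hw : ∀ i, 0 < w i)
    (hfix : ∀ i, w i =
      ((Matrix.diagonal Λ * A) i ⬝ᵥ
        (((Matrix.diagonal Λ * A)ᵀ * Matrix.diagonal (fun k => w k ^ (1 - 2 / p)) *
            (Matrix.diagonal Λ * A))⁻¹ *ᵥ (Matrix.diagonal Λ * A) i)) ^ (p / 2))
    (R : ℝ) (hR : 0 < R) (x xbar : Fin d → ℝ)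
    (hx : ∑ i, |((Matrix.diagonal Λ * A) *ᵥ x) i| ^ p ≤ R)
    (hxbar : ∑ i, |((Matrix.diagonal Λ * A) *ᵥ xbar) i| ^ p ≤ R) (i : Fin n) :
    |Λ i * (f ((A *ᵥ x) i) - f ((A *ᵥ xbar) i))| ≤
      2 * (d : ℝ) ^ ((1 : ℝ) / 2 - 1 / max 2 p) * w i ^ (1 / p) * R ^ (1 / p) := by
  have h1 := lewis_coord_bound n d p hp (Matrix.diagonal Λ * A) hrank w hw hfix R hR x hx i
  have h2 := lewis_coord_bound n d p hp (Matrix.diagonal Λ * A) hrank w hw hfix R hR xbar hxbar i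
  have hUv : ∀ z : Fin d → ℝ, ((Matrix.diagonal Λ * A) *ᵥ z) i = Λ i * (A *ᵥ z) i := by
    intro z
    rw [← Matrix.mulVec_mulVec, Matrix.mulVec_diagonal]
  rw [hUv x] at h1
  rw [hUv xbar] at h2
  set s := (A *ᵥ x) i with hsd
  set t := (A *ᵥ xbar) i with htd
  set B := (d : ℝ) ^ ((1 : ℝ) / 2 - 1 / max 2 p) * w i ^ (1 / p) * R ^ (1 / p) with hB
  have hfs : |f s| ≤ |s| := by
    have := hf s 0; rwa [hf0, sub_zero, sub_zero] at this
  have hft : |f t| ≤ |t| := by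
    have := hf t 0; rwa [hf0, sub_zero, sub_zero] at this
  have habs : |f s - f t| ≤ |f s| + |f t| := abs_sub _ _
  calc |Λ i * (f s - f t)| = Λ i * |f s - f t| := by
        rw [abs_mul, abs_of_pos (hΛ i)]
    _ ≤ Λ i * (|f s| + |f t|) := mul_le_mul_of_nonneg_left habs (hΛ i).le
    _ ≤ Λ i * (|s| + |t|) := mul_le_mul_of_nonneg_left (add_le_add hfs hft) (hΛ i).le
    _ = |Λ i * s| + |Λ i * t| := by rw [abs_mul, abs_mul, abs_of_pos (hΛ i)]; ring
    _ ≤ B + B := add_le_add h1 h2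
    _ = 2 * (d : ℝ) ^ ((1 : ℝ) / 2 - 1 / max 2 p) * w i ^ (1 / p) * R ^ (1 / p) := by
        rw [hB]; ring
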